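/- For every natural number n ≥ 5 and all j (indices mod n), the operators B_j := (−1)^j (2|ψ_j⟩⟨ψ_j| − I) on ℂ³ satisfy B_j² = I, B_j is self-adjoint, and B_j commutes with B_{j+1}. -/

import Mathlib

open Real Matrix

lemma vmv_mul_vmv (a b c d : Fin 3 → ℂ) :
    vecMulVec a b * vecMulVec c d = (b ⬝ᵥ c) • vecMulVec a d := by
  ext i k
  simp only [Matrix.mul_apply, vecMulVec_apply, Matrix.smul_apply, dotProduct, smul_eq_mul,
    Finset.sum_mul]
  exact Finset.sum_congr rfl fun m _ => by ring

theorem stmt_3 (n : ℕ) (hn : 5 ≤ n) (ψ : ℕ → Fin 3 → ℂ)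
    (hψ : ∀ j : ℕ, ψ j = (1 / Real.sqrt (1 + Real.cos (π / n)) : ℝ) •
      (![(Real.cos (j * ((n - 1) * π / n)) : ℂ), (Real.sin (j * ((n - 1) * π / n)) : ℂ),
        (Real.sqrt (Real.cos (π / n)) : ℂ)]))
    (B : ℕ → Matrix (Fin 3) (Fin 3) ℂ)
    (hB : ∀ j : ℕ, B j = ((-1 : ℂ) ^ j) • (2 • Matrix.vecMulVec (ψ j) (star (ψ j)) - 1)) :
    ∀ j : ℕ, B j ^ 2 = 1 ∧ IsSelfAdjoint (B j) ∧ Commute (B j) (B (j + 1)) := by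
  have hn0 : (0 : ℝ) < n := by positivity
  set c : ℝ := Real.cos (π / n) with hc_def
  have hc : 0 < c := by
    apply Real.cos_pos_of_mem_Ioo
    constructor
    · have : 0 < π / n := by positivity
      linarith [Real.pi_pos]
    · have h5 : (5 : ℝ) ≤ n := by exact_mod_cast hn
      have : π / n ≤ π / 5 := by
        apply div_le_div_of_nonneg_left Real.pi_pos.le (by norm_num) h5
      have h2 : π / 5 < π / 2 := by
        apply div_lt_div_of_pos_left Real.pi_pos (by norm_num) (by norm_num)
      linarith
  have h1c : (0 : ℝ) < 1 + c := by linarith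
  set θ : ℝ := (n - 1) * π / n with hθ_def
  have hθ : θ = π - π / n := by
    field_simp [hθ_def]
    rw [hθ_def, div_mul_cancel₀ _ hn0.ne']
    ring
  have hcosθ : Real.cos θ = -c := by
    rw [hθ, Real.cos_pi_sub]
  -- general dot product formula
  have hdot : ∀ j k : ℕ, star (ψ j) ⬝ᵥ ψ k =
      (((Real.cos ((j : ℝ) * θ - (k : ℝ) * θ) + c) / (1 + c) : ℝ) : ℂ) := by
    intro j k
    have hsqc : Real.sqrt c * Real.sqrt c = c := Real.mul_self_sqrt hc.le
    have hsq1c : Real.sqrt (1 + c) * Real.sqrt (1 + c) = 1 + c := Real.mul_self_sqrt h1c.le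
    have hs1c : Real.sqrt (1 + c) ≠ 0 := by positivity
    rw [hψ j, hψ k]
    simp only [dotProduct, Fin.sum_univ_three, Pi.star_apply, Pi.smul_apply,
      Matrix.cons_val_zero, Matrix.cons_val_one, Matrix.head_cons,
      Matrix.cons_val_two, Matrix.tail_cons, Complex.real_smul, star_mul',
      Complex.star_def, Complex.conj_ofReal]
    norm_cast
    rw [Real.cos_sub]
    field_simp
    rw [Real.sq_sqrt hc.le, Real.sq_sqrt h1c.le]
  have hdot_self : ∀ j : ℕ, star (ψ j) ⬝ᵥ ψ j = 1 := by
    intro j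
    rw [hdot j j]
    norm_num [div_self (ne_of_gt h1c)]
  have hdot_succ : ∀ j : ℕ, star (ψ j) ⬝ᵥ ψ (j + 1) = 0 := by
    intro j
    rw [hdot j (j + 1), Complex.ofReal_eq_zero]
    push_cast
    rw [show (j : ℝ) * θ - ((j : ℝ) + 1) * θ = -θ by ring, Real.cos_neg, hcosθ]
    simp
  have hdot_succ' : ∀ j : ℕ, star (ψ (j + 1)) ⬝ᵥ ψ j = 0 := by
    intro j
    rw [hdot (j + 1) j, Complex.ofReal_eq_zero]
    push_cast
    rw [show ((j : ℝ) + 1) * θ - (j : ℝ) * θ = θ by ring, hcosθ]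
    simp
  intro j
  set P : Matrix (Fin 3) (Fin 3) ℂ := vecMulVec (ψ j) (star (ψ j)) with hP
  set Q : Matrix (Fin 3) (Fin 3) ℂ := vecMulVec (ψ (j + 1)) (star (ψ (j + 1))) with hQ
  have hPP : P * P = P := by
    rw [hP, vmv_mul_vmv, show star (ψ j) ⬝ᵥ ψ j = 1 from hdot_self j, one_smul]
  have hQQ : Q * Q = Q := by
    rw [hQ, vmv_mul_vmv, show star (ψ (j + 1)) ⬝ᵥ ψ (j + 1) = 1 from hdot_self (j + 1), one_smul]
  have hPQ : P * Q = 0 := by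
    rw [hP, hQ, vmv_mul_vmv, hdot_succ j, zero_smul]
  have hQP : Q * P = 0 := by
    rw [hP, hQ, vmv_mul_vmv, hdot_succ' j, zero_smul]
  have hMsq : (2 • P - 1) * (2 • P - 1) = 1 := by
    have expand : (2 • P - 1) * (2 • P - 1) = 4 • (P * P) - 4 • P + 1 := by noncomm_ring
    rw [expand, hPP]
    abel
  have hcomm : (2 • P - 1) * (2 • Q - 1) = (2 • Q - 1) * (2 • P - 1) := by
    have e1 : (2 • P - 1) * (2 • Q - 1) = 4 • (P * Q) - 2 • P - 2 • Q + 1 := by noncomm_ring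
    have e2 : (2 • Q - 1) * (2 • P - 1) = 4 • (Q * P) - 2 • Q - 2 • P + 1 := by noncomm_ring
    rw [e1, e2, hPQ, hQP]
    abel
  refine ⟨?_, ?_, ?_⟩
  · rw [hB j, sq, smul_mul_smul_comm, ← pow_add, hMsq]
    rw [show (-1 : ℂ) ^ (j + j) = 1 by
      rw [← two_mul, pow_mul]; norm_num]
    rw [one_smul]
  · rw [hB j]
    have hPstar : star P = P := by
      ext i k
      simp [hP, Matrix.star_apply, vecMulVec_apply, mul_comm]
    have h1 : _root_.IsSelfAdjoint ((-1 : ℂ) ^ j) := by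
      rw [_root_.IsSelfAdjoint, star_pow, star_neg, star_one]
    have h2 : _root_.IsSelfAdjoint (2 • P - 1) := by
      rw [_root_.IsSelfAdjoint, star_sub, star_one, star_nsmul, hPstar]
    exact h1.smul h2
  · show B j * B (j + 1) = B (j + 1) * B j
    rw [hB j, hB (j + 1), smul_mul_smul_comm, smul_mul_smul_comm, hcomm, mul_comm]
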